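/- For every n ≥ 4, the prefix of the golden string S of length F_n − 2 equals the substring of S occupying positions 2F_{n+1} + 1 through F_{n+3} − 2 (inclusive). -/

import Mathlib

/-- The finite golden strings: `gs 1 = [B]`, `gs 2 = [B, A]`, `gs n = gs (n-1) ++ gs (n-2)`.
Here `true` denotes the letter B and `false` denotes the letter A. -/
def gs : ℕ → List Bool
  | 0 => []
  | 1 => [true]
  | 2 => [true, false]
  | (n+3) => gs (n+2) ++ gs (n+1)

/-- The `i`-th letter (1-indexed) of the infinite golden string `S`;
`true` = B, `false` = A.  Since `gs n` is a prefix of `gs (n+1)` and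
`(gs (i+1)).length = F (i+2) ≥ i`, this is well-defined. -/
def goldenLetter (i : ℕ) : Bool := (gs (i+1)).getD (i-1) true

/-- `s` is the (index set of the) Zeckendorf decomposition of `n`:
a set of indices `≥ 2`, no two adjacent, with `n = ∑_{i ∈ s} F i`. -/
def IsZeck (n : ℕ) (s : Finset ℕ) : Prop :=
  (∀ i ∈ s, 2 ≤ i) ∧ (∀ i ∈ s, i + 1 ∉ s) ∧ n = ∑ i ∈ s, Nat.fib i

/-- `c` is the coefficient function of the Chung–Graham decomposition of `n`:
`n = ∑_{i ≥ 1} c i * F (2i)` with `c i ∈ {0,1,2}` and a coefficient `0`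
strictly between any two coefficients equal to `2`. -/
def IsCG (n : ℕ) (c : ℕ →₀ ℕ) : Prop :=
  (∀ i, c i ≤ 2) ∧ c 0 = 0 ∧
  (∀ i₁ i₂, i₁ < i₂ → c i₁ = 2 → c i₂ = 2 → ∃ j, i₁ < j ∧ j < i₂ ∧ c j = 0) ∧
  n = c.sum (fun i a => a * Nat.fib (2 * i))

/-- `n` has `F (2k)` as the smallest summand of its Zeckendorf decomposition. -/
def ZeckMin (k n : ℕ) : Prop :=
  ∃ s : Finset ℕ, IsZeck n s ∧ 2 * k ∈ s ∧ ∀ i ∈ s, 2 * k ≤ i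

/-- `n` has `F (2k)` or `2 F (2k)` as the smallest summand of its
Chung–Graham decomposition. -/
def CGMin (k n : ℕ) : Prop :=
  ∃ c : ℕ →₀ ℕ, IsCG n c ∧ 1 ≤ c k ∧ ∀ i < k, c i = 0

theorem gs_length : ∀ m, (gs (m+1)).length = Nat.fib (m+2)
  | 0 => rfl
  | 1 => rfl
  | (k+2) => by
      show (gs (k+2) ++ gs (k+1)).length = Nat.fib (k+4)
      rw [List.length_append, gs_length k, gs_length (k+1),
        show Nat.fib (k+4) = Nat.fib (k+2) + Nat.fib (k+3) from Nat.fib_add_two]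
      exact Nat.add_comm _ _

theorem gs_prefix_succ : ∀ m, gs (m+1) <+: gs (m+2)
  | 0 => ⟨[false], rfl⟩
  | (k+1) => ⟨gs (k+1), rfl⟩

theorem gs_prefix {m m' : ℕ} (h : m ≤ m') : gs (m+1) <+: gs (m'+1) := by
  induction h with
  | refl => exact List.prefix_refl _
  | step h ih => exact ih.trans (gs_prefix_succ _)

theorem le_fib_add_two : ∀ i, i ≤ Nat.fib (i+2)
  | 0 => by decide
  | (k+1) => by
      have h1 := le_fib_add_two k
      have h2 := Nat.fib_pos.mpr (show 0 < k+1 by omega)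
      rw [show Nat.fib (k+3) = Nat.fib (k+1) + Nat.fib (k+2) from Nat.fib_add_two]
      omega

theorem getD_of_prefix {l L : List Bool} (h : l <+: L) {k : ℕ}
    (hk : k < l.length) : L.getD k true = l.getD k true := by
  obtain ⟨r, rfl⟩ := h
  exact List.getD_append _ _ _ _ hk

theorem goldenLetter_eq (i m : ℕ) (h1 : 1 ≤ i) (h2 : i ≤ Nat.fib (m+2)) :
    goldenLetter i = (gs (m+1)).getD (i-1) true := by
  unfold goldenLetter
  rcases le_total i m with h | h
  · refine (getD_of_prefix (gs_prefix h) ?_).symm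
    rw [gs_length]
    have := le_fib_add_two i
    omega
  · refine getD_of_prefix (gs_prefix h) ?_
    rw [gs_length]
    omega

theorem gs_swap : ∀ m, ∃ t a b, gs (m+2) ++ gs (m+1) = t ++ [a, b] ∧
    gs (m+1) ++ gs (m+2) = t ++ [b, a]
  | 0 => ⟨[true], false, true, rfl, rfl⟩
  | (k+1) => by
      obtain ⟨t, a, b, h1, h2⟩ := gs_swap k
      refine ⟨gs (k+2) ++ t, b, a, ?_, ?_⟩
      · show (gs (k+2) ++ gs (k+1)) ++ gs (k+2) = _
        rw [List.append_assoc, h2, List.append_assoc]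
      · show gs (k+2) ++ (gs (k+2) ++ gs (k+1)) = _
        rw [h1, List.append_assoc]

theorem golden_shift_two_fib (n : ℕ) (hn : 4 ≤ n) :
    ∀ i : ℕ, 1 ≤ i → i ≤ Nat.fib n - 2 →
      goldenLetter (2 * Nat.fib (n + 1) + i) = goldenLetter i := by
  obtain ⟨m, rfl⟩ : ∃ m, n = m + 4 := ⟨n - 4, by omega⟩
  intro i hi1 hi2
  obtain ⟨j, rfl⟩ : ∃ j, i = j + 1 := ⟨i - 1, by omega⟩
  obtain ⟨t, a, b, h1, h2⟩ := gs_swap m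
  -- fib recurrences
  have hf4 : Nat.fib (m+4) = Nat.fib (m+2) + Nat.fib (m+3) := Nat.fib_add_two
  have hf5 : Nat.fib (m+5) = Nat.fib (m+3) + Nat.fib (m+4) := Nat.fib_add_two
  have hf6 : Nat.fib (m+6) = Nat.fib (m+4) + Nat.fib (m+5) := Nat.fib_add_two
  have hf7 : Nat.fib (m+7) = Nat.fib (m+5) + Nat.fib (m+6) := Nat.fib_add_two
  have hfib3 : 3 ≤ Nat.fib (m+4) := by
    have h := Nat.fib_mono (show 4 ≤ m+4 by omega)
    simpa [show Nat.fib 4 = 3 from rfl] using h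
  have htlen : t.length + 2 = Nat.fib (m+4) := by
    have hc := congrArg List.length h1
    rw [List.length_append, show (gs (m+2)).length = Nat.fib (m+3) from gs_length (m+1),
      show (gs (m+1)).length = Nat.fib (m+2) from gs_length m] at hc
    simp only [List.length_append, List.length_cons, List.length_nil] at hc
    omega
  have hj : j < t.length := by omega
  have hl5 : (gs (m+5)).length = Nat.fib (m+6) := gs_length (m+4)
  have hl2 : (gs (m+2)).length = Nat.fib (m+3) := gs_length (m+1)
  -- key list computation
  have hlist : (gs (m+6)).getD (2 * Nat.fib (m+5) + j) true = t.getD j true := by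
    show (gs (m+5) ++ gs (m+4)).getD (2 * Nat.fib (m+5) + j) true = _
    rw [List.getD_append_right _ _ _ _ (by rw [hl5]; omega), hl5,
      show 2 * Nat.fib (m+5) + j - Nat.fib (m+6) = Nat.fib (m+3) + j by omega,
      show gs (m+4) = gs (m+2) ++ (gs (m+1) ++ gs (m+2)) by
        show (gs (m+2) ++ gs (m+1)) ++ gs (m+2) = _
        rw [List.append_assoc],
      List.getD_append_right _ _ _ _ (by rw [hl2]; omega), hl2,
      show Nat.fib (m+3) + j - Nat.fib (m+3) = j by omega,
      h2, List.getD_append _ _ _ _ hj]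
  have key : goldenLetter (2 * Nat.fib (m+5) + (j+1)) = goldenLetter (j+1) := by
    rw [goldenLetter_eq (2 * Nat.fib (m+5) + (j+1)) (m+5) (by omega)
        (by have e : Nat.fib (m+5+2) = Nat.fib (m+7) := rfl; omega),
      goldenLetter_eq (j+1) (m+2) (by omega)
        (by have e : Nat.fib (m+2+2) = Nat.fib (m+4) := rfl; omega)]
    rw [show 2 * Nat.fib (m+5) + (j+1) - 1 = 2 * Nat.fib (m+5) + j by omega, hlist,
      show j + 1 - 1 = j by omega]
    show _ = (gs (m+2) ++ gs (m+1)).getD j true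
    rw [h1, List.getD_append _ _ _ _ hj]
  exact key
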